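/- arXiv:1807.06733 — 2 statements merged into one kernel-verified Lean document; each statement's English description precedes it below -/
import Mathlib

section
/- Let X be a cluster-tilting subcategory of a triangulated category C with split idempotents, and let A →f B →g D →h ΣA be a distinguished triangle in C. Then ḡ is an epimorphism in the quotient category C/X if and only if h̄ = 0 in C/X, that is, if and only if h factors through an object of X. -/
open CategoryTheory CategoryTheory.Limits CategoryTheory.Pretriangulated

universe v u

variable {C : Type u} [Category.{v} C] [Preadditive C] [HasZeroObject C]
  [HasShift C ℤ] [∀ n : ℤ, (shiftFunctor C n).Additive] [Pretriangulated C]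

/-- `f` factors through an object satisfying `X`. -/
def FactorsThru (X : C → Prop) {A B : C} (f : A ⟶ B) : Prop :=
  ∃ (X₀ : C) (g : A ⟶ X₀) (h : X₀ ⟶ B), X X₀ ∧ g ≫ h = f

/-- The hom relation on `C` identifying two morphisms when their difference factors
through an object of `X`; the quotient category `C/X` is the quotient by this relation. -/
def homRelOf (X : C → Prop) : HomRel C :=
  fun {A B : C} (f g : A ⟶ B) => FactorsThru X (f - g)

/-- The additive quotient category `C/X`. -/
abbrev QuotCat (X : C → Prop) := CategoryTheory.Quotient (homRelOf X)

/-- The quotient functor `C ⥤ C/X`, sending a morphism `f` to its class `f̄`. -/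
abbrev quotFunctor (X : C → Prop) : C ⥤ QuotCat X := Quotient.functor _

/-- `X` is a full additive subcategory: it contains the zero objects and is closed under
isomorphisms, finite direct sums and direct summands. -/
structure IsAdditiveClosed (X : C → Prop) : Prop where
  zero : ∀ Z : C, IsZero Z → X Z
  iso : ∀ {A B : C}, (A ≅ B) → X A → X B
  biprod : ∀ {A B : C} (b : BinaryBicone A B), Nonempty b.IsBilimit → X A → X B → X b.pt
  summand : ∀ {A B : C} (i : A ⟶ B) (p : B ⟶ A), i ≫ p = 𝟙 A → X B → X A

/-- `X` is a cluster-tilting subcategory of the triangulated category `C`: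
it is a full additive subcategory such that (i) `Hom(X₁, ΣX₂) = 0` for all `X₁, X₂ ∈ X`, and
(ii) every object `A` fits into a distinguished triangle `X₀ ⟶ X₁ ⟶ A ⟶ ΣX₀` with
`X₀, X₁ ∈ X`. -/
structure IsClusterTilting (X : C → Prop) extends IsAdditiveClosed X : Prop where
  hom_shift_zero : ∀ {X₁ X₂ : C}, X X₁ → X X₂ → ∀ f : X₁ ⟶ X₂⟦(1 : ℤ)⟧, f = 0
  exists_triangle : ∀ A : C, ∃ (X₀ X₁ : C) (f : X₀ ⟶ X₁) (g : X₁ ⟶ A) (h : A ⟶ X₀⟦(1 : ℤ)⟧),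
    X X₀ ∧ X X₁ ∧ Triangle.mk f g h ∈ distTriang C

/-- `f : A ⟶ B` is `X`-monic: every morphism from `A` to an object of `X` factors through `f`. -/
def XMonic (X : C → Prop) {A B : C} (f : A ⟶ B) : Prop :=
  ∀ X' : C, X X' → ∀ u : A ⟶ X', ∃ v : B ⟶ X', f ≫ v = u

/-- `f : A ⟶ B` is `X`-epic: every morphism from an object of `X` to `B` factors through `f`. -/
def XEpic (X : C → Prop) {A B : C} (f : A ⟶ B) : Prop :=
  ∀ X' : C, X X' → ∀ u : X' ⟶ B, ∃ v : X' ⟶ A, v ≫ f = u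

section Aux

variable {X : C → Prop}

lemma factorsThru_zero (hX : IsClusterTilting X) (A B : C) :
    FactorsThru X (0 : A ⟶ B) := by
  obtain ⟨Z, hZ⟩ := HasZeroObject.zero (C := C)
  exact ⟨Z, 0, 0, hX.zero Z hZ, by simp⟩

/-- If `φ ≫ s = 0` for the connecting map `s` of a cluster-tilting triangle over the codomain,
then `φ` factors through `X`. -/
lemma factorsThru_of_comp_zero {A B X₀' X₁' : C} (hX₁ : X X₁')
    {f' : X₀' ⟶ X₁'} {t : X₁' ⟶ B} {s : B ⟶ X₀'⟦(1 : ℤ)⟧}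
    (hT' : Triangle.mk f' t s ∈ distTriang C)
    (φ : A ⟶ B) (hφ : φ ≫ s = 0) : FactorsThru X φ := by
  obtain ⟨e, he⟩ := Triangle.coyoneda_exact₃ _ hT' φ hφ
  exact ⟨X₁', e, t, hX₁, he.symm⟩

/-- Conversely, any `X`-factoring morphism composes to zero with the connecting map of a
cluster-tilting triangle. -/
lemma comp_zero_of_factorsThru (hX : IsClusterTilting X) {A B X₀' X₁' : C} (hX₀ : X X₀')
    {f' : X₀' ⟶ X₁'} {t : X₁' ⟶ B} {s : B ⟶ X₀'⟦(1 : ℤ)⟧}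
    (_hT' : Triangle.mk f' t s ∈ distTriang C)
    (φ : A ⟶ B) (hφ : FactorsThru X φ) : φ ≫ s = 0 := by
  obtain ⟨X'', p, q, hX'', hpq⟩ := hφ
  rw [← hpq, Category.assoc, hX.hom_shift_zero hX'' hX₀ (q ≫ s), comp_zero]

lemma congruence_homRelOf (hX : IsClusterTilting X) : Congruence (homRelOf X) where
  equivalence := by
    refine ⟨fun f => ?_, fun {f g} hfg => ?_, fun {f g k} hfg hgk => ?_⟩
    · simpa [homRelOf, sub_self] using factorsThru_zero hX _ _
    · obtain ⟨X₀, p, q, hX₀, hpq⟩ := hfg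
      exact ⟨X₀, -p, q, hX₀, by rw [Preadditive.neg_comp, hpq, neg_sub]⟩
    · obtain ⟨X₀', X₁', f', t, s, hX₀', hX₁', hT'⟩ := hX.exists_triangle _
      refine factorsThru_of_comp_zero hX₁' hT' _ ?_
      have h₁ := comp_zero_of_factorsThru hX hX₀' hT' _ hfg
      have h₂ := comp_zero_of_factorsThru hX hX₀' hT' _ hgk
      have : (f - g) ≫ s + (g - k) ≫ s = 0 := by rw [h₁, h₂, add_zero]
      simpa [← Preadditive.add_comp, sub_add_sub_cancel] using this
  comp_left := by
    intro _ _ _ a g g' hgg'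
    obtain ⟨X₀, p, q, hX₀, hpq⟩ := hgg'
    exact ⟨X₀, a ≫ p, q, hX₀, by rw [Category.assoc, hpq, Preadditive.comp_sub]⟩
  comp_right := by
    intro _ _ _ f f' b hff'
    obtain ⟨X₀, p, q, hX₀, hpq⟩ := hff'
    exact ⟨X₀, p, q ≫ b, hX₀, by rw [← Category.assoc, hpq, Preadditive.sub_comp]⟩

end Aux

/-- For a distinguished triangle `A ⟶ B ⟶ D ⟶ ΣA` over a cluster-tilting
subcategory `X`, the class `ḡ` is an epimorphism in `C/X` iff `h` factors through `X`. -/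
theorem epi_iff_factorsThru [IsIdempotentComplete C]
    (X : C → Prop) (hX : IsClusterTilting X)
    {A B D : C} (f : A ⟶ B) (g : B ⟶ D) (h : D ⟶ A⟦(1 : ℤ)⟧)
    (hT : Triangle.mk f g h ∈ distTriang C) :
    Epi ((quotFunctor X).map g) ↔ FactorsThru X h := by
  haveI : Congruence (homRelOf X) := congruence_homRelOf hX
  constructor
  · intro hepi
    have hgh : g ≫ h = 0 := comp_distTriang_mor_zero₂₃ _ hT
    have : (quotFunctor X).map g ≫ (quotFunctor X).map h =
        (quotFunctor X).map g ≫ (quotFunctor X).map (0 : D ⟶ A⟦(1 : ℤ)⟧) := by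
      rw [← Functor.map_comp, ← Functor.map_comp, hgh, comp_zero]
    have := (cancel_epi ((quotFunctor X).map g)).mp this
    have hrel : homRelOf X h (0 : D ⟶ A⟦(1 : ℤ)⟧) :=
      (Quotient.functor_map_eq_iff (homRelOf X) _ _).mp this
    simpa [homRelOf, sub_zero] using hrel
  · rintro ⟨X₀h, p, q, hX₀h, hpq⟩
    refine ⟨fun {Z} φ ψ hφψ => ?_⟩
    obtain ⟨E⟩ := Z
    obtain ⟨e, rfl⟩ := (quotFunctor X).map_surjective φ
    obtain ⟨e', rfl⟩ := (quotFunctor X).map_surjective ψ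
    rw [← Functor.map_comp, ← Functor.map_comp] at hφψ
    have hrel : homRelOf X (g ≫ e) (g ≫ e') :=
      (Quotient.functor_map_eq_iff (homRelOf X) _ _).mp hφψ
    obtain ⟨X', u, v, hX', huv⟩ := hrel
    -- cluster-tilting triangle over `E`
    obtain ⟨X₀', X₁', f', t, s, hX₀', hX₁', hT'⟩ := hX.exists_triangle E
    -- `g ≫ ((e - e') ≫ s) = 0`
    have h1 : g ≫ ((e - e') ≫ s) = 0 := by
      have : g ≫ (e - e') = u ≫ v := by rw [Preadditive.comp_sub, huv]
      rw [← Category.assoc, this, Category.assoc,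
        hX.hom_shift_zero hX' hX₀' (v ≫ s), comp_zero]
    -- hence `(e - e') ≫ s` factors through `h`
    obtain ⟨w, hw⟩ : ∃ w : A⟦(1 : ℤ)⟧ ⟶ X₀'⟦(1 : ℤ)⟧, (e - e') ≫ s = h ≫ w :=
      Triangle.yoneda_exact₃ _ hT ((e - e') ≫ s) h1
    -- and it vanishes since `q ≫ w : X₀h ⟶ X₀'⟦1⟧` is zero
    have hw' : (e - e') ≫ s = h ≫ w := hw
    have h2 : (e - e') ≫ s = 0 := by
      rw [hw', ← hpq, Category.assoc, hX.hom_shift_zero hX₀h hX₀' (q ≫ w), comp_zero]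
    -- so `e - e'` factors through `X₁' ∈ X`
    have hfac : FactorsThru X (e - e') := factorsThru_of_comp_zero hX₁' hT' _ h2
    exact (Quotient.functor_map_eq_iff (homRelOf X) _ _).mpr hfac
end

section
/- Let X be a cluster-tilting subcategory of a triangulated category C with split idempotents, and let A →f B →g D →h ΣA be a distinguished triangle in C. Then ḡ is a monomorphism in the quotient category C/X if and only if f̄ = 0 in C/X, that is, if and only if f factors through an object of X. -/
open CategoryTheory CategoryTheory.Limits CategoryTheory.Pretriangulated

universe v u

variable {C : Type u} [Category.{v} C] [Preadditive C] [HasZeroObject C]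
  [HasShift C ℤ] [∀ n : ℤ, (shiftFunctor C n).Additive] [Pretriangulated C]

section Auxiliary

open ZeroObject

variable {X : C → Prop}

lemma aux_factorsThru_zero (hX : IsAdditiveClosed X) {A B : C} :
    FactorsThru X (0 : A ⟶ B) :=
  ⟨0, 0, 0, hX.zero _ (isZero_zero C), by simp⟩

lemma aux_factorsThru_comp_left {A' A B : C} (k : A' ⟶ A) {f : A ⟶ B}
    (hf : FactorsThru X f) : FactorsThru X (k ≫ f) := by
  obtain ⟨X₀, a, b, hX₀, rfl⟩ := hf
  exact ⟨X₀, k ≫ a, b, hX₀, by simp⟩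

lemma aux_factorsThru_comp_right {A B B' : C} {f : A ⟶ B} (k : B ⟶ B')
    (hf : FactorsThru X f) : FactorsThru X (f ≫ k) := by
  obtain ⟨X₀, a, b, hX₀, rfl⟩ := hf
  exact ⟨X₀, a, b ≫ k, hX₀, by simp⟩

lemma aux_factorsThru_neg {A B : C} {f : A ⟶ B} (hf : FactorsThru X f) :
    FactorsThru X (-f) := by
  obtain ⟨X₀, a, b, hX₀, rfl⟩ := hf
  exact ⟨X₀, a, -b, hX₀, by simp⟩

lemma aux_exists_binaryBicone (P Q : C) : ∃ b : BinaryBicone P Q, Nonempty b.IsBilimit := by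
  obtain ⟨Y, i, p, hS⟩ := distinguished_cocone_triangle (0 : (Q⟦(-1:ℤ)⟧) ⟶ P)
  obtain ⟨r, hr⟩ := Triangle.yoneda_exact₂ _ hS (𝟙 P) (by exact Category.comp_id _)
  obtain ⟨s, hs⟩ := Triangle.coyoneda_exact₁ _ hS (𝟙 ((Q⟦(-1:ℤ)⟧)⟦(1:ℤ)⟧)) (by exact (Category.id_comp _).trans (Functor.map_zero _ _ _))
  change Y ⟶ P at r
  change (Q⟦(-1:ℤ)⟧)⟦(1:ℤ)⟧ ⟶ Y at s
  dsimp only [Triangle.mk] at hr hs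
  have hip : i ≫ p = 0 := comp_distTriang_mor_zero₂₃ _ hS
  have hir : i ≫ r = 𝟙 P := hr.symm
  have hsp : s ≫ p = 𝟙 _ := hs.symm
  set ε : ((Q⟦(-1:ℤ)⟧)⟦(1:ℤ)⟧) ≅ Q := (shiftFunctorCompIsoId C (-1:ℤ) (1:ℤ) (by omega)).app Q
    with hε
  have hfst : i ≫ (r - p ≫ s ≫ r) = 𝟙 P := by
    simp [Preadditive.comp_sub, reassoc_of% hip, hir]
  refine ⟨⟨Y, r - p ≫ s ≫ r, p ≫ ε.hom, i, ε.inv ≫ s, hfst, ?_, ?_, ?_⟩, ?_⟩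
  · simp [reassoc_of% hip]
  · simp [Preadditive.comp_sub, reassoc_of% hsp]
  · simp [reassoc_of% hsp]
  · refine ⟨isBinaryBilimitOfTotal _ ?_⟩
    dsimp only
    have h1 : (p ≫ ε.hom) ≫ ε.inv ≫ s = p ≫ s := by simp
    have htp : (𝟙 Y - (r - p ≫ s ≫ r) ≫ i - p ≫ s) ≫ p = 0 := by
      simp [Preadditive.sub_comp, Category.assoc, hip, hsp]
    obtain ⟨m, hm⟩ := Triangle.coyoneda_exact₃ _ hS _ htp
    have hm0 : m = 0 := by
      have h2 : (𝟙 Y - (r - p ≫ s ≫ r) ≫ i - p ≫ s) ≫ (r - p ≫ s ≫ r) = 0 := by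
        simp [Preadditive.sub_comp, Preadditive.comp_sub, Category.assoc, reassoc_of% hsp,
          reassoc_of% hip, hir, hsp]
      change Y ⟶ P at m
      dsimp only [Triangle.mk] at hm
      have h3 := hm ▸ h2
      rwa [Category.assoc, hfst, Category.comp_id] at h3
    have h4 : (𝟙 Y - (r - p ≫ s ≫ r) ≫ i - p ≫ s) = 0 := by rw [hm, hm0, zero_comp]; rfl
    rw [h1]
    exact (sub_eq_zero.mp (by rwa [sub_sub] at h4)).symm

lemma aux_factorsThru_add (hX : IsAdditiveClosed X) {A B : C} {f₁ f₂ : A ⟶ B}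
    (h1 : FactorsThru X f₁) (h2 : FactorsThru X f₂) : FactorsThru X (f₁ + f₂) := by
  obtain ⟨P, a₁, b₁, hP, rfl⟩ := h1
  obtain ⟨Q, a₂, b₂, hQ, rfl⟩ := h2
  obtain ⟨b, hb⟩ := aux_exists_binaryBicone P Q
  refine ⟨b.pt, a₁ ≫ b.inl + a₂ ≫ b.inr, b.fst ≫ b₁ + b.snd ≫ b₂, hX.biprod b hb hP hQ, ?_⟩
  simp [Preadditive.add_comp, Preadditive.comp_add]

lemma aux_congruence (hX : IsAdditiveClosed X) : Congruence (homRelOf X) where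
  equivalence := by
    intro A' B'
    constructor
    · intro f
      show FactorsThru X (f - f)
      simpa using aux_factorsThru_zero hX
    · intro f g hfg
      show FactorsThru X (g - f)
      simpa [neg_sub] using aux_factorsThru_neg hfg
    · intro f g h h1 h2
      show FactorsThru X (f - h)
      simpa [sub_add_sub_cancel] using aux_factorsThru_add hX h1 h2
  comp_left := by
    intro _ _ _ f g g' hg
    show FactorsThru X (f ≫ g - f ≫ g')
    simpa [Preadditive.comp_sub] using aux_factorsThru_comp_left f hg
  comp_right := by
    intro _ _ _ f f' g hf
    show FactorsThru X (f ≫ g - f' ≫ g)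
    simpa [Preadditive.sub_comp] using aux_factorsThru_comp_right g hf

lemma aux_hom_shiftneg_zero (hX : IsClusterTilting X) {P Q : C} (hP : X P) (hQ : X Q)
    (φ : P⟦(-1:ℤ)⟧ ⟶ Q) : φ = 0 := by
  apply (shiftFunctor C (1:ℤ)).map_injective
  rw [Functor.map_zero]
  set ε : ((P⟦(-1:ℤ)⟧)⟦(1:ℤ)⟧) ≅ P := (shiftFunctorCompIsoId C (-1:ℤ) (1:ℤ) (by omega)).app P
  have h0 : ε.inv ≫ (shiftFunctor C (1:ℤ)).map φ = 0 := hX.hom_shift_zero hP hQ _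
  calc (shiftFunctor C (1:ℤ)).map φ
      = ε.hom ≫ (ε.inv ≫ (shiftFunctor C (1:ℤ)).map φ) := by rw [Iso.hom_inv_id_assoc]
    _ = 0 := by rw [h0, comp_zero]

/-- The left `X`-approximation triangle of an object `T` (up to replacing `T` by an
isomorphic object). -/
lemma aux_exists_approx (hX : IsClusterTilting X) (T : C) :
    ∃ (𝒯 : Triangle C) (_ : T ≅ 𝒯.obj₁), X 𝒯.obj₂ ∧ X 𝒯.obj₃ ∧ 𝒯 ∈ (distTriang C) ∧
      (∀ (X'' : C), X X'' → ∀ u₀ : 𝒯.obj₁ ⟶ X'', ∃ w : 𝒯.obj₂ ⟶ X'', 𝒯.mor₁ ≫ w = u₀) := by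
  obtain ⟨X₄, X₅, α, β, γ, h4, h5, hD⟩ := hX.exists_triangle (T⟦(1:ℤ)⟧)
  refine ⟨(Triangle.mk α β γ).invRotate,
    ((shiftFunctorCompIsoId C (1:ℤ) (-1:ℤ) (by omega)).app T).symm, h4, h5,
    inv_rot_of_distTriang _ hD, ?_⟩
  intro X'' hX'' u₀
  have hD' : (Triangle.mk α β γ).invRotate.invRotate ∈ distTriang C :=
    inv_rot_of_distTriang _ (inv_rot_of_distTriang _ hD)
  obtain ⟨w, hw⟩ := Triangle.yoneda_exact₂ _ hD' u₀
    (aux_hom_shiftneg_zero hX h5 hX'' _)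
  exact ⟨w, hw.symm⟩

/-- The key step: if `f` factors through `X` and `u ≫ g` factors through `X`,
then `u` factors through `X`. -/
lemma aux_key (hX : IsClusterTilting X) {A B D : C} {f : A ⟶ B} {g : B ⟶ D}
    {h : D ⟶ A⟦(1:ℤ)⟧} (hT : Triangle.mk f g h ∈ distTriang C) (hf : FactorsThru X f)
    {T : C} (u : T ⟶ B) (hu : FactorsThru X (u ≫ g)) : FactorsThru X u := by
  obtain ⟨X₀, a, b, hX₀, hab⟩ := hf
  obtain ⟨𝒯, e, h4, h5, h𝒯, happrox⟩ := aux_exists_approx hX T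
  set u₁ : 𝒯.obj₁ ⟶ B := e.inv ≫ u with hu₁def
  have hu₁ : FactorsThru X (u₁ ≫ g) := by
    rw [hu₁def, Category.assoc]
    exact aux_factorsThru_comp_left e.inv hu
  obtain ⟨X', c, d, hX', hcd⟩ := hu₁
  obtain ⟨c', hc'⟩ := happrox X' hX' c
  set k : 𝒯.obj₂ ⟶ D := c' ≫ d with hkdef
  have hk : 𝒯.mor₁ ≫ k = u₁ ≫ g := by rw [hkdef, ← Category.assoc, hc', hcd]
  have hgh : g ≫ h = 0 := comp_distTriang_mor_zero₂₃ _ hT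
  have h1 : 𝒯.mor₁ ≫ (k ≫ h) = 0 := by
    rw [← Category.assoc, hk, Category.assoc, hgh, comp_zero]
  obtain ⟨m, hm⟩ := Triangle.yoneda_exact₂ _ h𝒯 (k ≫ h) h1
  have hma : m ≫ (shiftFunctor C (1:ℤ)).map f = 0 := by
    rw [← hab, Functor.map_comp, ← Category.assoc,
      hX.hom_shift_zero h5 hX₀ (m ≫ (shiftFunctor C (1:ℤ)).map a), zero_comp]
  obtain ⟨n, hn⟩ := Triangle.coyoneda_exact₁ _ hT m hma
  change 𝒯.obj₃ ⟶ D at n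
  dsimp only [Triangle.mk] at hn
  have h2 : (k - 𝒯.mor₂ ≫ n) ≫ h = 0 := by
    rw [Preadditive.sub_comp, hm, Category.assoc 𝒯.mor₂ n h, ← hn, sub_self]
  obtain ⟨e', he'⟩ := Triangle.coyoneda_exact₃ _ hT (k - 𝒯.mor₂ ≫ n) h2
  change 𝒯.obj₂ ⟶ B at e'
  dsimp only [Triangle.mk] at he'
  have hda : 𝒯.mor₁ ≫ 𝒯.mor₂ = 0 := comp_distTriang_mor_zero₁₂ _ h𝒯
  have h3 : (u₁ - 𝒯.mor₁ ≫ e') ≫ g = 0 := by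
    rw [Preadditive.sub_comp, Category.assoc 𝒯.mor₁ e' g, ← he', Preadditive.comp_sub, hk,
      ← Category.assoc 𝒯.mor₁ 𝒯.mor₂ n, hda, zero_comp, sub_zero, sub_self]
  obtain ⟨v, hv⟩ := Triangle.coyoneda_exact₂ _ hT (u₁ - 𝒯.mor₁ ≫ e') h3
  change 𝒯.obj₁ ⟶ A at v
  dsimp only [Triangle.mk] at hv
  have hu₁eq : u₁ = 𝒯.mor₁ ≫ e' + v ≫ f := by rw [← hv]; abel
  have hu₁fac : FactorsThru X u₁ := by
    rw [hu₁eq]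
    refine aux_factorsThru_add hX.toIsAdditiveClosed ⟨𝒯.obj₂, 𝒯.mor₁, e', h4, rfl⟩ ?_
    exact ⟨X₀, v ≫ a, b, hX₀, by rw [Category.assoc, hab]⟩
  have : u = e.hom ≫ u₁ := by rw [hu₁def, ← Category.assoc, e.hom_inv_id, Category.id_comp]
  rw [this]
  exact aux_factorsThru_comp_left e.hom hu₁fac

end Auxiliary

/-- For a distinguished triangle `A ⟶ B ⟶ D ⟶ ΣA` over a cluster-tilting
subcategory `X`, the class `ḡ` is a monomorphism in `C/X` iff `f` factors through `X`. -/
theorem mono_iff_factorsThru [IsIdempotentComplete C]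
    (X : C → Prop) (hX : IsClusterTilting X)
    {A B D : C} (f : A ⟶ B) (g : B ⟶ D) (h : D ⟶ A⟦(1 : ℤ)⟧)
    (hT : Triangle.mk f g h ∈ distTriang C) :
    Mono ((quotFunctor X).map g) ↔ FactorsThru X f := by
  haveI : Congruence (homRelOf X) := aux_congruence hX.toIsAdditiveClosed
  constructor
  · intro hmono
    have hfg : f ≫ g = 0 := comp_distTriang_mor_zero₁₂ _ hT
    have h1 : (quotFunctor X).map f ≫ (quotFunctor X).map g
        = (quotFunctor X).map (0 : A ⟶ B) ≫ (quotFunctor X).map g := by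
      rw [← Functor.map_comp, ← Functor.map_comp, zero_comp, hfg]
    have h2 := (Quotient.functor_map_eq_iff (homRelOf X) f 0).mp
      ((cancel_mono ((quotFunctor X).map g)).mp h1)
    show FactorsThru X f
    simpa [homRelOf] using h2
  · intro hf
    refine ⟨fun {Z} p q hpq => ?_⟩
    obtain ⟨p', hp'⟩ := (quotFunctor X).map_surjective (X := Z.as) (Y := B) p
    obtain ⟨q', hq'⟩ := (quotFunctor X).map_surjective (X := Z.as) (Y := B) q
    rw [← hp', ← hq'] at hpq ⊢
    rw [← Functor.map_comp, ← Functor.map_comp] at hpq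
    have h1 : homRelOf X (p' ≫ g) (q' ≫ g) :=
      (Quotient.functor_map_eq_iff (homRelOf X) _ _).mp hpq
    have h2 : FactorsThru X ((p' - q') ≫ g) := by
      rw [Preadditive.sub_comp]
      exact h1
    have h3 : FactorsThru X (p' - q') := aux_key hX hT hf _ h2
    exact (Quotient.functor_map_eq_iff (homRelOf X) _ _).mpr h3
end
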